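/- Let L be a first-order language, M an L-structure, N an elementary substructure of M, and ā, b̄ : Fin n → M two n-tuples that have the same type over N. Then there exist an L-structure M', an elementary embedding f : M → M', and a sequence (d̄_k)_{k<ω} of n-tuples of M' such that both sequences ⟨f∘ā, d̄_0, d̄_1, d̄_2, …⟩ and ⟨f∘b̄, d̄_0, d̄_1, d̄_2, …⟩ are indiscernible over the image f(N). (In particular, for any A ⊆ N, both sequences are indiscernible over f(A); this witnesses d_A(ā, b̄) = 1 whenever ā and b̄ have the same type over some model containing A.) -/

import Mathlib

open FirstOrder FirstOrder.Language

universe u v w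

/-- A sequence `e` of `n`-tuples of an `L`-structure `M'` is indiscernible over a set `B ⊆ M'`:
for every formula `φ(z̄, x̄₁, …, x̄ᵣ)` (with `z̄` an `m`-tuple and each `x̄ₜ` an `n`-tuple of free
variables), all strictly increasing index tuples `k`, `l` and all parameters `c̄` from `B`, the
formula holds of `(c̄, e_{k 1}, …, e_{k r})` iff it holds of `(c̄, e_{l 1}, …, e_{l r})`. -/
def IndiscernibleOver (L : FirstOrder.Language.{v, w}) (M' : Type*) [L.Structure M']
    (B : Set M') (n : ℕ) (e : ℕ → Fin n → M') : Prop :=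
  ∀ (m r : ℕ) (φ : L.Formula (Fin m ⊕ (Fin r × Fin n))) (k l : Fin r → ℕ),
    StrictMono k → StrictMono l →
    ∀ c : Fin m → M', (∀ j, c j ∈ B) →
      (φ.Realize (Sum.elim c fun p => e (k p.1) p.2) ↔
        φ.Realize (Sum.elim c fun p => e (l p.1) p.2))

section UltraAux

open Filter

variable {I : Type*} (U : Ultrafilter I)

/-- Iterated ultrafilter quantifier, outermost over the last coordinate. -/
def UVal : (r : ℕ) → ((Fin r → I) → Prop) → Prop
  | 0, R => R finZeroElim
  | r + 1, R => {c : I | UVal r fun t => R (Fin.snoc t c)} ∈ U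

variable {U}

lemma uval_congr {r : ℕ} {R R' : (Fin r → I) → Prop} (h : ∀ t, R t ↔ R' t) :
    UVal U r R ↔ UVal U r R' := by
  have : R = R' := funext fun t => propext (h t)
  rw [this]

lemma uval_const {r : ℕ} {p : Prop} : UVal U r (fun _ => p) ↔ p := by
  induction r with
  | zero => exact Iff.rfl
  | succ r ih =>
    show {c : I | UVal U r fun _ => p} ∈ U ↔ p
    have h : {c : I | UVal U r fun _ => p} = {_c : I | p} := by ext c; exact ih
    rw [h]
    exact eventually_const

lemma uval_and {r : ℕ} {R R' : (Fin r → I) → Prop} :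
    UVal U r (fun t => R t ∧ R' t) ↔ UVal U r R ∧ UVal U r R' := by
  induction r with
  | zero => exact Iff.rfl
  | succ r ih =>
    show {c : I | UVal U r fun t => R (Fin.snoc t c) ∧ R' (Fin.snoc t c)} ∈ U ↔ _
    have h : {c : I | UVal U r fun t => R (Fin.snoc t c) ∧ R' (Fin.snoc t c)} =
        {c : I | (UVal U r fun t => R (Fin.snoc t c)) ∧ UVal U r fun t => R' (Fin.snoc t c)} := by
      ext c; exact ih
    rw [h]
    exact eventually_and

lemma uval_not {r : ℕ} {R : (Fin r → I) → Prop} :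
    UVal U r (fun t => ¬ R t) ↔ ¬ UVal U r R := by
  induction r with
  | zero => exact Iff.rfl
  | succ r ih =>
    show {c : I | UVal U r fun t => ¬ R (Fin.snoc t c)} ∈ U ↔ _
    have h : {c : I | UVal U r fun t => ¬ R (Fin.snoc t c)} =
        {c : I | ¬ UVal U r fun t => R (Fin.snoc t c)} := by
      ext c; exact ih
    rw [h]
    exact Ultrafilter.eventually_not

lemma uval_exists {r : ℕ} {R : (Fin r → I) → Prop} (h : UVal U r R) : ∃ t, R t := by
  induction r with
  | zero => exact ⟨finZeroElim, h⟩
  | succ r ih =>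
    obtain ⟨c, hc⟩ := Filter.nonempty_of_mem (f := (U : Filter I)) h
    obtain ⟨t, ht⟩ := ih hc
    exact ⟨Fin.snoc t c, ht⟩

lemma uval_comp : ∀ {m r : ℕ} (j : Fin r → Fin m), StrictMono j →
    ∀ (R : (Fin r → I) → Prop), (UVal U m fun t => R (t ∘ j)) ↔ UVal U r R := by
  intro m
  induction m with
  | zero =>
    intro r j _ R
    match r with
    | 0 =>
      show R (finZeroElim ∘ j) ↔ R finZeroElim
      rw [show (finZeroElim ∘ j : Fin 0 → I) = finZeroElim from funext fun i => i.elim0]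
    | r + 1 => exact (j 0).elim0
  | succ m ihm =>
    intro r j hj R
    by_cases hlast : ∃ i, j i = Fin.last m
    · match r with
      | 0 => exact hlast.choose.elim0
      | r + 1 =>
        obtain ⟨i0, hi0⟩ := hlast
        have hi0' : i0 = Fin.last r := by
          by_contra hne
          have hlt : i0 < Fin.last r := lt_of_le_of_ne (Fin.le_last _) hne
          have := hj hlt
          rw [hi0] at this
          exact absurd (this.trans_le (Fin.le_last _)) (lt_irrefl _)
        subst hi0'
        have hjlt : ∀ i : Fin r, (j i.castSucc : ℕ) < m := by
          intro i
          have := hj (Fin.castSucc_lt_last i)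
          rw [hi0] at this
          exact this
        set j₁ : Fin r → Fin m := fun i => ⟨(j i.castSucc : ℕ), hjlt i⟩ with hj₁def
        have hj₁ : StrictMono j₁ := fun x y h =>
          Fin.mk_lt_mk.2 (hj (Fin.castSucc_lt_castSucc_iff.2 h))
        show {c : I | UVal U m fun t => R (Fin.snoc t c ∘ j)} ∈ U ↔
          {c : I | UVal U r fun u => R (Fin.snoc u c)} ∈ U
        have hset : {c : I | UVal U m fun t => R (Fin.snoc t c ∘ j)} =
            {c : I | UVal U r fun u => R (Fin.snoc u c)} := by
          ext c
          have h1 : ∀ t : Fin m → I, Fin.snoc t c ∘ j = Fin.snoc (t ∘ j₁) c := by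
            intro t
            funext i
            induction i using Fin.lastCases with
            | last => simp only [Function.comp_apply, hi0, Fin.snoc_last]
            | cast i =>
              have hji : j i.castSucc = (j₁ i).castSucc := by
                apply Fin.ext
                simp [hj₁def]
              simp only [Function.comp_apply, hji, Fin.snoc_castSucc]
          calc (UVal U m fun t => R (Fin.snoc t c ∘ j))
              ↔ UVal U m fun t => (fun u => R (Fin.snoc u c)) (t ∘ j₁) := by
                apply uval_congr; intro t; rw [h1]
            _ ↔ UVal U r fun u => R (Fin.snoc u c) := ihm j₁ hj₁ (fun u => R (Fin.snoc u c))
        rw [hset]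
    · push_neg at hlast
      have hjlt : ∀ i, (j i : ℕ) < m := by
        intro i
        have h1 : j i < Fin.last m := lt_of_le_of_ne (Fin.le_last _) (hlast i)
        exact h1
      set j₀ : Fin r → Fin m := fun i => ⟨(j i : ℕ), hjlt i⟩ with hj₀def
      have hj₀ : StrictMono j₀ := fun x y h => Fin.mk_lt_mk.2 (hj h)
      show {c : I | UVal U m fun t => R (Fin.snoc t c ∘ j)} ∈ U ↔ UVal U r R
      have h1 : ∀ (c : I), (UVal U m fun t => R (Fin.snoc t c ∘ j)) ↔ UVal U r R := by
        intro c
        calc (UVal U m fun t => R (Fin.snoc t c ∘ j))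
            ↔ UVal U m fun t => R (t ∘ j₀) := by
              apply uval_congr; intro t
              have : Fin.snoc t c ∘ j = t ∘ j₀ := by
                funext i
                have hji : j i = (j₀ i).castSucc := by apply Fin.ext; simp [hj₀def]
                simp only [Function.comp_apply, hji, Fin.snoc_castSucc]
              rw [this]
          _ ↔ UVal U r R := ihm j₀ hj₀ R
      have hset : {c : I | UVal U m fun t => R (Fin.snoc t c ∘ j)} = {c : I | UVal U r R} := by
        ext c; exact h1 c
      rw [hset]
      exact eventually_const

lemma uval_insert0 : ∀ (r : ℕ) (P : (Fin r → I) → Prop) (Q : I → (Fin r → I) → Prop),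
    (∀ u, (P u ↔ {x : I | Q x u} ∈ U)) →
    (UVal U r P ↔ UVal U (r + 1) (fun t => Q (t 0) (fun i => t i.succ))) := by
  intro r
  induction r with
  | zero =>
    intro P Q h
    have hP : UVal U 0 P ↔ {x : I | Q x finZeroElim} ∈ U := h finZeroElim
    rw [hP]
    have hset : {x : I | Q x finZeroElim} =
        {c : I | UVal U 0 fun t : Fin 0 → I =>
          Q ((Fin.snoc t c : Fin 1 → I) 0) fun i : Fin 0 => (Fin.snoc t c : Fin 1 → I) i.succ} := by
      ext c
      show Q c finZeroElim ↔ Q ((Fin.snoc finZeroElim c : Fin 1 → I) 0)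
        (fun i : Fin 0 => (Fin.snoc finZeroElim c : Fin 1 → I) i.succ)
      have h0 : (Fin.snoc finZeroElim c : Fin 1 → I) 0 = c := by
        rw [show (0 : Fin 1) = Fin.last 0 from rfl, Fin.snoc_last]
      have h1 : (fun i : Fin 0 => (Fin.snoc finZeroElim c : Fin 1 → I) i.succ) =
          (finZeroElim : Fin 0 → I) := funext fun i => i.elim0
      rw [h0, h1]
    rw [hset]
    exact Iff.rfl
  | succ r ih =>
    intro P Q h
    have hset : {c : I | UVal U r fun u => P (Fin.snoc u c)} =
        {c : I | UVal U (r + 1) fun t' => Q ((Fin.snoc t' c : Fin (r + 2) → I) 0)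
          fun i => (Fin.snoc t' c : Fin (r + 2) → I) i.succ} := by
      ext c
      simp only [Set.mem_setOf_eq]
      have step := ih (fun u => P (Fin.snoc u c)) (fun x u => Q x (Fin.snoc u c))
        (fun u => h (Fin.snoc u c))
      rw [step]
      apply uval_congr
      intro t'
      have h0 : (Fin.snoc t' c : Fin (r + 2) → I) 0 = t' 0 := by
        have h00 : (0 : Fin (r + 2)) = Fin.castSucc (0 : Fin (r + 1)) := rfl
        rw [h00, Fin.snoc_castSucc]
      have h1 : (fun i : Fin (r + 1) => (Fin.snoc t' c : Fin (r + 2) → I) i.succ) =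
          Fin.snoc (fun i : Fin r => t' i.succ) c := by
        funext i
        induction i using Fin.lastCases with
        | last =>
          have hl : (Fin.last r).succ = Fin.last (r + 1) := by
            apply Fin.ext; simp
          rw [hl, Fin.snoc_last, Fin.snoc_last]
        | cast i =>
          have hc : (i.castSucc).succ = (i.succ).castSucc := by
            apply Fin.ext; simp
          rw [hc, Fin.snoc_castSucc, Fin.snoc_castSucc]
      rw [h0, h1]
    show {c : I | UVal U r fun u => P (Fin.snoc u c)} ∈ U ↔ _
    rw [hset]
    exact Iff.rfl

/-- Extend a family of sets with the finite intersection property to an ultrafilter. -/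
lemma ultrafilter_of_family {α : Type*} (S : Set (Set α)) (huniv : Set.univ ∈ S)
    (hinter : ∀ X ∈ S, ∀ Y ∈ S, X ∩ Y ∈ S) (hne : ∀ X ∈ S, X.Nonempty) :
    ∃ V : Ultrafilter α, ∀ X ∈ S, X ∈ V := by
  have h1 : ∀ t : Set (Set α), t ⊆ S → t.Finite → ∃ X ∈ S, X ⊆ ⋂₀ t := by
    intro t hts htf
    refine Set.Finite.induction_on (motive := fun t _ => t ⊆ S → ∃ X ∈ S, X ⊆ ⋂₀ t) t htf
      (fun _ => ⟨Set.univ, huniv, by simp⟩) ?_ hts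
    intro A s _ _ ih hsub
    obtain ⟨X, hXS, hX⟩ := ih (fun Y hY => hsub (Set.mem_insert_of_mem _ hY))
    refine ⟨A ∩ X, hinter _ (hsub (Set.mem_insert _ _)) _ hXS, ?_⟩
    rw [Set.sInter_insert]
    exact Set.inter_subset_inter_right _ hX
  have hnb : (Filter.generate S).NeBot :=
    Filter.generate_neBot_iff.2 fun t hts htf => by
      obtain ⟨X, hXS, hX⟩ := h1 t hts htf
      exact (hne X hXS).mono hX
  exact ⟨Ultrafilter.of (Filter.generate S),
    fun X hX => Ultrafilter.of_le _ (Filter.mem_generate_of_mem hX)⟩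

end UltraAux

section ModelAux

open Filter

variable {L : FirstOrder.Language.{v, w}} {M : Type u} [L.Structure M]

/-- Transport of indiscernibility along a first-order isomorphism. -/
lemma IndiscernibleOver.map_equiv {M₂ : Type*} [L.Structure M₂] (g : M ≃[L] M₂)
    {B : Set M} {n : ℕ} {e : ℕ → Fin n → M} (h : IndiscernibleOver L M B n e) :
    IndiscernibleOver L M₂ (⇑g '' B) n (fun k i => g (e k i)) := by
  intro m r φ k l hk hl c hc
  have hc' : ∀ j, g.symm (c j) ∈ B := by
    intro j
    obtain ⟨y, hy, hgy⟩ := hc j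
    rw [← hgy, g.symm_apply_apply]
    exact hy
  show φ.Realize (Sum.elim c fun p => g (e (k p.1) p.2)) ↔
    φ.Realize (Sum.elim c fun p => g (e (l p.1) p.2))
  have harg : ∀ kk : Fin r → ℕ, (Sum.elim c fun p : Fin r × Fin n => g (e (kk p.1) p.2)) =
      ⇑g ∘ Sum.elim (fun j => g.symm (c j)) (fun p => e (kk p.1) p.2) := by
    intro kk
    funext i
    cases i with
    | inl j =>
      show c j = g (g.symm (c j))
      rw [g.apply_symm_apply]
    | inr p => rfl
  rw [harg k, harg l, show (⇑g : M → M₂) = ⇑g.toElementaryEmbedding from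
      (Equiv.coe_toElementaryEmbedding g).symm,
    g.toElementaryEmbedding.map_formula, g.toElementaryEmbedding.map_formula]
  exact h m r φ k l hk hl _ hc'

variable (N : L.ElementarySubstructure M) {n : ℕ}

/-- Same-type hypotheses transfer from `Fin m`-indexed parameters to arbitrary finite
parameter index types. -/
lemma hab_finite {a b : Fin n → M}
    (hab : ∀ (m : ℕ) (φ : L.Formula (Fin m ⊕ Fin n)) (c : Fin m → M), (∀ j, c j ∈ N) →
      (φ.Realize (Sum.elim c a) ↔ φ.Realize (Sum.elim c b)))
    (α : Type) [Finite α] (ψ : L.Formula (α ⊕ Fin n)) (c : α → N) :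
    ψ.Realize (Sum.elim (fun j => ((c j : M))) a) ↔
      ψ.Realize (Sum.elim (fun j => ((c j : M))) b) := by
  haveI := Fintype.ofFinite α
  set e := Fintype.equivFin α with he
  have key := hab (Fintype.card α) (ψ.relabel (Sum.map e id))
    (fun j => ((c (e.symm j) : M))) (fun j => (c (e.symm j)).2)
  have h1 : ∀ g : Fin n → M,
      (Sum.elim (fun j : Fin (Fintype.card α) => ((c (e.symm j) : M))) g) ∘ (Sum.map e id) =
        Sum.elim (fun j => ((c j : M))) g := by
    intro g
    funext x
    cases x with
    | inl j => simp
    | inr i => simp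
  rw [Formula.realize_relabel, Formula.realize_relabel, h1, h1] at key
  exact key

/-- The ultrafilter of "type-average" sets over `N` determined by the tuple `a`. -/
lemma exists_type_ultrafilter [Nonempty M] (a : Fin n → M) :
    ∃ U : Ultrafilter (Fin n → N),
      ∀ (α : Type) [Finite α] (ψ : L.Formula (α ⊕ Fin n)) (c : α → N),
        ({e : Fin n → N | ψ.Realize (Sum.elim (fun j => ((c j : M)))
            (fun i => ((e i : M))))} ∈ U ↔
          ψ.Realize (Sum.elim (fun j => ((c j : M))) a)) := by
  classical
  set SU : Set (Set (Fin n → N)) :=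
    {X | ∃ (α : Type) (_ : Finite α) (ψ : L.Formula (α ⊕ Fin n)) (c : α → N),
      ψ.Realize (Sum.elim (fun j => ((c j : M))) a) ∧
      X = {e | ψ.Realize (Sum.elim (fun j => ((c j : M))) (fun i => ((e i : M))))}} with hSU
  have huniv : Set.univ ∈ SU := by
    refine ⟨Empty, inferInstance, ⊤, fun x => x.elim, ?_, ?_⟩
    · exact Formula.realize_top.2 trivial
    · ext e
      simp [Formula.realize_top]
  have hinter : ∀ X ∈ SU, ∀ Y ∈ SU, X ∩ Y ∈ SU := by
    rintro X ⟨α₁, i₁, ψ₁, c₁, h₁, rfl⟩ Y ⟨α₂, i₂, ψ₂, c₂, h₂, rfl⟩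
    refine ⟨α₁ ⊕ α₂, inferInstance,
      (ψ₁.relabel (Sum.map Sum.inl id)) ⊓ (ψ₂.relabel (Sum.map Sum.inr id)),
      Sum.elim c₁ c₂, ?_, ?_⟩
    · have harg1 : ∀ g : Fin n → M,
          (Sum.elim (fun j : α₁ ⊕ α₂ => (((Sum.elim c₁ c₂ j : N) : M))) g) ∘ (Sum.map Sum.inl id) =
            Sum.elim (fun j => ((c₁ j : M))) g := by
        intro g; funext x; cases x <;> rfl
      have harg2 : ∀ g : Fin n → M,
          (Sum.elim (fun j : α₁ ⊕ α₂ => (((Sum.elim c₁ c₂ j : N) : M))) g) ∘ (Sum.map Sum.inr id) =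
            Sum.elim (fun j => ((c₂ j : M))) g := by
        intro g; funext x; cases x <;> rfl
      rw [Formula.realize_inf, Formula.realize_relabel, Formula.realize_relabel, harg1, harg2]
      exact ⟨h₁, h₂⟩
    · have harg1 : ∀ g : Fin n → M,
          (Sum.elim (fun j : α₁ ⊕ α₂ => (((Sum.elim c₁ c₂ j : N) : M))) g) ∘ (Sum.map Sum.inl id) =
            Sum.elim (fun j => ((c₁ j : M))) g := by
        intro g; funext x; cases x <;> rfl
      have harg2 : ∀ g : Fin n → M,
          (Sum.elim (fun j : α₁ ⊕ α₂ => (((Sum.elim c₁ c₂ j : N) : M))) g) ∘ (Sum.map Sum.inr id) =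
            Sum.elim (fun j => ((c₂ j : M))) g := by
        intro g; funext x; cases x <;> rfl
      ext e
      simp only [Set.mem_inter_iff, Set.mem_setOf_eq, Formula.realize_inf,
        Formula.realize_relabel, harg1, harg2]
  have hne : ∀ X ∈ SU, X.Nonempty := by
    rintro X ⟨α, iα, ψ, c, h, rfl⟩
    have hθM : (ψ.iExs (Fin n)).Realize
        (fun j => ((c j : M))) := Formula.realize_iExs.2 ⟨a, h⟩
    have hθN : (ψ.iExs (Fin n)).Realize c :=
      (N.subtype.map_formula _ c).1 hθM
    obtain ⟨i, hi⟩ := Formula.realize_iExs.1 hθN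
    refine ⟨i, ?_⟩
    have h2 : ψ.Realize ((fun x : N => (x : M)) ∘ Sum.elim c i) :=
      (N.subtype.map_formula ψ (Sum.elim c i)).2 hi
    have h3 : ((fun x : N => (x : M)) ∘ Sum.elim c i) =
        Sum.elim (fun j => ((c j : M))) (fun i' => ((i i' : M))) := by
      funext x; cases x <;> rfl
    rw [h3] at h2
    exact h2
  obtain ⟨U, hU⟩ := ultrafilter_of_family SU huniv hinter hne
  refine ⟨U, ?_⟩
  intro α iα ψ c
  constructor
  · intro hmem
    by_contra hn
    have h2 := hU _ ⟨α, iα, ψ.not, c, Formula.realize_not.2 hn, rfl⟩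
    obtain ⟨e, he1, he2⟩ := Filter.nonempty_of_mem
      (Filter.inter_mem (Ultrafilter.mem_coe.2 hmem) (Ultrafilter.mem_coe.2 h2))
    exact (Formula.realize_not.1 he2) he1
  · intro h
    exact hU _ ⟨α, iα, ψ, c, h, rfl⟩

/-- The ultrafilter on `ω`-indexed sequences realizing `UVal` on strictly increasing
cylinders. -/
lemma exists_seq_ultrafilter {I : Type*} [Nonempty I] (U : Ultrafilter I) :
    ∃ W : Ultrafilter (ℕ → I), ∀ (r : ℕ) (k : Fin r → ℕ), StrictMono k →
      ∀ R : (Fin r → I) → Prop, ({s : ℕ → I | R (fun i => s (k i))} ∈ W ↔ UVal U r R) := by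
  classical
  set SW : Set (Set (ℕ → I)) :=
    {C | ∃ (r : ℕ) (k : Fin r → ℕ) (R : (Fin r → I) → Prop),
      StrictMono k ∧ UVal U r R ∧ C = {s | R fun i => s (k i)}} with hSW
  have hcanon : ∀ (r : ℕ) (k : Fin r → ℕ), StrictMono k → ∀ (R : (Fin r → I) → Prop)
      (m : ℕ) (hm : ∀ i, k i < m),
      UVal U m (fun t => R fun i => t ⟨k i, hm i⟩) ↔ UVal U r R := by
    intro r k hk R m hm
    exact uval_comp (fun i => (⟨k i, hm i⟩ : Fin m)) (fun x y h => Fin.mk_lt_mk.2 (hk h)) R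
  have huniv : Set.univ ∈ SW := by
    refine ⟨0, finZeroElim, fun _ => True, fun x y _ => x.elim0, uval_const.2 trivial, ?_⟩
    ext s; simp
  have hinter : ∀ X ∈ SW, ∀ Y ∈ SW, X ∩ Y ∈ SW := by
    rintro X ⟨r₁, k₁, R₁, hk₁, hv₁, rfl⟩ Y ⟨r₂, k₂, R₂, hk₂, hv₂, rfl⟩
    set m : ℕ := max ((Finset.univ.sup k₁) + 1) ((Finset.univ.sup k₂) + 1) with hm
    have hm₁ : ∀ i, k₁ i < m := fun i =>
      lt_of_le_of_lt (Finset.le_sup (Finset.mem_univ i))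
        (lt_of_lt_of_le (Nat.lt_succ_self _) (le_max_left _ _))
    have hm₂ : ∀ i, k₂ i < m := fun i =>
      lt_of_le_of_lt (Finset.le_sup (Finset.mem_univ i))
        (lt_of_lt_of_le (Nat.lt_succ_self _) (le_max_right _ _))
    refine ⟨m, (fun i : Fin m => (i : ℕ)),
      fun t => (R₁ fun i => t ⟨k₁ i, hm₁ i⟩) ∧ (R₂ fun i => t ⟨k₂ i, hm₂ i⟩),
      fun x y h => h, uval_and.2 ⟨(hcanon r₁ k₁ hk₁ R₁ m hm₁).2 hv₁,
        (hcanon r₂ k₂ hk₂ R₂ m hm₂).2 hv₂⟩, ?_⟩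
    ext s
    simp only [Set.mem_inter_iff, Set.mem_setOf_eq]
  have hne : ∀ X ∈ SW, X.Nonempty := by
    rintro X ⟨r, k, R, hk, hv, rfl⟩
    obtain ⟨t, ht⟩ := uval_exists hv
    refine ⟨fun j => if h : ∃ i, k i = j then t h.choose else Classical.arbitrary I, ?_⟩
    show R _
    have heq : (fun i => if h : ∃ i', k i' = k i then t h.choose else Classical.arbitrary I) = t := by
      funext i
      have hex : ∃ i', k i' = k i := ⟨i, rfl⟩
      rw [dif_pos hex]
      congr 1
      exact hk.injective hex.choose_spec
    rw [heq]
    exact ht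
  obtain ⟨W, hW⟩ := ultrafilter_of_family SW huniv hinter hne
  refine ⟨W, ?_⟩
  intro r k hk R
  constructor
  · intro hmem
    by_contra hn
    have h2 := hW _ ⟨r, k, fun t => ¬ R t, hk, uval_not.2 hn, rfl⟩
    obtain ⟨s, hs1, hs2⟩ := Filter.nonempty_of_mem
      (Filter.inter_mem (Ultrafilter.mem_coe.2 hmem) (Ultrafilter.mem_coe.2 h2))
    exact hs2 hs1
  · intro h
    exact hW _ ⟨r, k, R, hk, h, rfl⟩

end ModelAux

/-- Let `N` be an elementary substructure of `M` and `a`, `b` two `n`-tuples of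
`M` with the same type over `N`. Then there are an elementary extension `f : M ↪ₑ[L] M'` and a
sequence `(d_k)_{k<ω}` of `n`-tuples of `M'` such that both `⟨f ∘ a, d₀, d₁, …⟩` and
`⟨f ∘ b, d₀, d₁, …⟩` are indiscernible over the image `f '' N`. -/
theorem exists_indiscernibles_witnessing_same_type_over_model
    {L : FirstOrder.Language.{v, w}} {M : Type u} [L.Structure M]
    (N : L.ElementarySubstructure M) {n : ℕ} (a b : Fin n → M)
    (hab : ∀ (m : ℕ) (φ : L.Formula (Fin m ⊕ Fin n)) (c : Fin m → M), (∀ j, c j ∈ N) →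
      (φ.Realize (Sum.elim c a) ↔ φ.Realize (Sum.elim c b))) :
    ∃ (M' : Type (max u v w)) (S : L.Structure M'),
      letI := S
      ∃ (f : M ↪ₑ[L] M') (d : ℕ → Fin n → M'),
        IndiscernibleOver L M' (f '' (N : Set M)) n
          (fun k => match k with | 0 => f ∘ a | (j + 1) => d j) ∧
        IndiscernibleOver L M' (f '' (N : Set M)) n
          (fun k => match k with | 0 => f ∘ b | (j + 1) => d j) := by
  classical
  by_cases hM : Nonempty M
  · haveI := hM
    obtain ⟨U, hU⟩ := exists_type_ultrafilter N a
    obtain ⟨W, hW⟩ := exists_seq_ultrafilter U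
    let f₀ : M ↪ₑ[L] (W : Filter (ℕ → Fin n → N)).Product (fun _ => M) :=
      { toFun := fun x0 => (↑(fun _ : ℕ → Fin n → N => x0) :
          (W : Filter (ℕ → Fin n → N)).Product (fun _ => M))
        map_formula' := by
          intro k φ v
          exact (Ultraproduct.realize_formula_cast (u := W) φ (fun i _ => v i)).trans
            Filter.eventually_const }
    let dd : ℕ → Fin n → (W : Filter (ℕ → Fin n → N)).Product (fun _ => M) :=
      fun j p => (↑(fun s : ℕ → Fin n → N => ((s j p : M))) :
        (W : Filter (ℕ → Fin n → N)).Product (fun _ => M))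
    let seq : (Fin n → M) → ℕ → Fin n → (W : Filter (ℕ → Fin n → N)).Product (fun _ => M) :=
      fun g kk => match kk with | 0 => ⇑f₀ ∘ g | (j + 1) => dd j
    -- the master computation
    have master : ∀ (g : Fin n → M),
        (∀ (α : Type) [Finite α] (ψ : L.Formula (α ⊕ Fin n)) (c : α → N),
          ψ.Realize (Sum.elim (fun j => ((c j : M))) g) ↔
            ψ.Realize (Sum.elim (fun j => ((c j : M))) a)) →
        ∀ (m r : ℕ) (φ : L.Formula (Fin m ⊕ (Fin r × Fin n))) (k : Fin r → ℕ),
          StrictMono k → ∀ (c' : Fin m → N),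
          (φ.Realize (Sum.elim (fun j => f₀ ((c' j : M))) fun p => seq g (k p.1) p.2) ↔
            UVal U r (fun t => φ.Realize (Sum.elim (fun j => ((c' j : M)))
              fun p => ((t p.1 p.2 : M))))) := by
      intro g hg m r φ k hk c'
      set c'' : Fin m → M := fun j => ((c' j : M)) with hc''
      set Rφ : (Fin r → Fin n → N) → Prop :=
        fun t => φ.Realize (Sum.elim c'' fun p => ((t p.1 p.2 : M))) with hRφ
      by_cases hk0 : ∃ i : Fin r, k i = 0
      · -- front case: the first entry of the tuple is `g`
        match r, k, hk, hk0, φ, Rφ, hRφ with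
        | 0, k, hk, hk0, φ, Rφ, hRφ => exact absurd hk0 (by rintro ⟨i, _⟩; exact i.elim0)
        | r' + 1, k, hk, hk0, φ, Rφ, hRφ =>
        obtain ⟨i0, hi00⟩ := hk0
        have hk00 : k 0 = 0 := by
          rcases eq_or_ne i0 0 with h | h
          · rwa [h] at hi00
          · have h1 := hk (Fin.pos_of_ne_zero h)
            omega
        have hkpos : ∀ i : Fin r', k i.succ ≠ 0 := by
          intro i
          have := hk (Fin.succ_pos i)
          omega
        set k' : Fin r' → ℕ := fun i => k i.succ - 1 with hk'def
        have hk' : StrictMono k' := by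
          intro x y h
          have h1 := hk (show x.succ < y.succ from Fin.succ_lt_succ_iff.2 h)
          have h2 := hkpos x
          simp only [hk'def]
          omega
        set x : (Fin m ⊕ (Fin (r' + 1) × Fin n)) → (ℕ → Fin n → N) → M :=
          Sum.elim (fun j _ => c'' j)
            (fun p s => Fin.cases (motive := fun _ => M) (g p.2)
              (fun i => ((s (k' i) p.2 : M))) p.1) with hx
        have hfun : (Sum.elim (fun j => f₀ (c'' j)) fun p : Fin (r' + 1) × Fin n =>
            seq g (k p.1) p.2) =
            fun i => (↑(x i) : (W : Filter (ℕ → Fin n → N)).Product (fun _ => M)) := by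
          funext i
          cases i with
          | inl j => rfl
          | inr p =>
            obtain ⟨p1, p2⟩ := p
            induction p1 using Fin.cases with
            | zero =>
              show seq g (k 0) p2 = _
              rw [hk00]
              show f₀ (g p2) = _
              have hxe : x (Sum.inr (0, p2)) = fun _ => g p2 := by
                funext s
                show Fin.cases (motive := fun _ => M) (g p2) _ (0 : Fin (r' + 1)) = g p2
                rw [Fin.cases_zero]
              rw [hxe]
              rfl
            | succ i =>
              have h1 : k i.succ = k' i + 1 := by
                have := hkpos i
                simp only [hk'def]
                omega
              show seq g (k i.succ) p2 = _
              rw [h1]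
              show dd (k' i) p2 = _
              have hxe : x (Sum.inr (i.succ, p2)) = fun s => ((s (k' i) p2 : M)) := by
                funext s
                show Fin.cases (motive := fun _ => M) (g p2) _ (i.succ) = _
                rw [Fin.cases_succ]
              rw [hxe]
        rw [hfun]
        refine (Ultraproduct.realize_formula_cast (u := W) φ x).trans ?_
        set Ra : (Fin r' → Fin n → N) → Prop :=
          fun u => φ.Realize (Sum.elim c'' fun p : Fin (r' + 1) × Fin n =>
            Fin.cases (motive := fun _ => M) (g p.2) (fun i => ((u i p.2 : M))) p.1) with hRa
        have hset : {s : ℕ → Fin n → N | φ.Realize fun i => x i s} =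
            {s : ℕ → Fin n → N | Ra fun i => s (k' i)} := by
          ext s
          show (φ.Realize fun i => x i s) ↔ _
          have h1 : (fun i => x i s) = Sum.elim c'' fun p : Fin (r' + 1) × Fin n =>
              Fin.cases (motive := fun _ => M) (g p.2) (fun i => ((s (k' i) p.2 : M))) p.1 := by
            funext i
            cases i <;> rfl
          rw [h1]
          exact Iff.rfl
        refine (iff_of_eq (congrArg (fun X => X ∈ W) hset)).trans ?_
        refine (hW r' k' hk' Ra).trans ?_
        -- now UVal U r' Ra ↔ UVal U (r' + 1) Rφ
        set Q : (Fin n → N) → (Fin r' → Fin n → N) → Prop :=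
          fun x0 u => φ.Realize (Sum.elim c'' fun p : Fin (r' + 1) × Fin n =>
            Fin.cases (motive := fun _ => M) ((x0 p.2 : M)) (fun i => ((u i p.2 : M))) p.1)
          with hQ
        have hins : ∀ u : Fin r' → Fin n → N, Ra u ↔ {x0 : Fin n → N | Q x0 u} ∈ U := by
          intro u
          set gmap : (Fin m ⊕ (Fin (r' + 1) × Fin n)) → ((Fin m ⊕ Fin r' × Fin n) ⊕ Fin n) :=
            Sum.elim (fun j => Sum.inl (Sum.inl j))
              (fun p => Fin.cases (motive := fun _ => (Fin m ⊕ Fin r' × Fin n) ⊕ Fin n)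
                (Sum.inr p.2) (fun i => Sum.inl (Sum.inr (i, p.2))) p.1) with hgmap
          set cu : (Fin m ⊕ Fin r' × Fin n) → N :=
            Sum.elim c' (fun q => u q.1 q.2) with hcu
          have hre : ∀ w : Fin n → M,
              (φ.relabel gmap).Realize (Sum.elim (fun j => ((cu j : M))) w) ↔
                φ.Realize (Sum.elim c'' fun p : Fin (r' + 1) × Fin n =>
                  Fin.cases (motive := fun _ => M) (w p.2)
                    (fun i => ((u i p.2 : M))) p.1) := by
            intro w
            rw [Formula.realize_relabel]
            have harg : (Sum.elim (fun j => ((cu j : M))) w) ∘ gmap =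
                Sum.elim c'' fun p : Fin (r' + 1) × Fin n =>
                  Fin.cases (motive := fun _ => M) (w p.2)
                    (fun i => ((u i p.2 : M))) p.1 := by
              funext i
              cases i with
              | inl j => rfl
              | inr p =>
                obtain ⟨p1, p2⟩ := p
                induction p1 using Fin.cases with
                | zero => simp [hgmap, hcu, Function.comp]
                | succ i => simp [hgmap, hcu, Function.comp]
            rw [harg]
          have hkey := hU (Fin m ⊕ Fin r' × Fin n) (φ.relabel gmap) cu
          have hsetQ : {e : Fin n → N | (φ.relabel gmap).Realize
              (Sum.elim (fun j => ((cu j : M))) (fun i => ((e i : M))))} =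
              {x0 : Fin n → N | Q x0 u} := by
            ext e
            exact hre (fun i => ((e i : M)))
          rw [hsetQ] at hkey
          rw [hkey]
          exact ((hre g).symm.trans (hg _ (φ.relabel gmap) cu))
        have hval := uval_insert0 r' Ra Q hins
        refine hval.trans ?_
        have hQR : (fun t : Fin (r' + 1) → Fin n → N => Q (t 0) (fun i => t i.succ)) = Rφ := by
          funext t
          show Q (t 0) (fun i => t i.succ) = Rφ t
          rw [hQ, hRφ]
          apply congrArg φ.Realize
          apply congrArg (Sum.elim c'')
          funext p
          obtain ⟨p1, p2⟩ := p
          induction p1 using Fin.cases with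
          | zero => rw [Fin.cases_zero]
          | succ i => rw [Fin.cases_succ]
        rw [hQR]
      · -- pure case: all entries come from `dd`
        have hkpos : ∀ i, k i ≠ 0 := fun i hi => hk0 ⟨i, hi⟩
        set k' : Fin r → ℕ := fun i => k i - 1 with hk'def
        have hk' : StrictMono k' := by
          intro x y h
          have h1 := hk h
          have h2 := hkpos x
          simp only [hk'def]
          omega
        set x : (Fin m ⊕ (Fin r × Fin n)) → (ℕ → Fin n → N) → M :=
          Sum.elim (fun j _ => c'' j) (fun p s => ((s (k' p.1) p.2 : M))) with hx
        have hfun : (Sum.elim (fun j => f₀ (c'' j)) fun p : Fin r × Fin n =>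
            seq g (k p.1) p.2) =
            fun i => (↑(x i) : (W : Filter (ℕ → Fin n → N)).Product (fun _ => M)) := by
          funext i
          cases i with
          | inl j => rfl
          | inr p =>
            have h1 : k p.1 = k' p.1 + 1 := by
              have := hkpos p.1
              simp only [hk'def]
              omega
            show seq g (k p.1) p.2 = _
            rw [h1]
            rfl
        rw [hfun]
        refine (Ultraproduct.realize_formula_cast (u := W) φ x).trans ?_
        have hset : {s : ℕ → Fin n → N | φ.Realize fun i => x i s} =
            {s : ℕ → Fin n → N | Rφ fun i => s (k' i)} := by
          ext s
          show (φ.Realize fun i => x i s) ↔ _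
          have h1 : (fun i => x i s) =
              Sum.elim c'' fun p : Fin r × Fin n => ((s (k' p.1) p.2 : M)) := by
            funext i
            cases i <;> rfl
          rw [h1]
          exact Iff.rfl
        exact (iff_of_eq (congrArg (fun X => X ∈ W) hset)).trans (hW r k' hk' Rφ)
    -- indiscernibility at the level of the ultrapower
    have hInd : ∀ (g : Fin n → M),
        (∀ (α : Type) [Finite α] (ψ : L.Formula (α ⊕ Fin n)) (c : α → N),
          ψ.Realize (Sum.elim (fun j => ((c j : M))) g) ↔
            ψ.Realize (Sum.elim (fun j => ((c j : M))) a)) →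
        IndiscernibleOver L ((W : Filter (ℕ → Fin n → N)).Product (fun _ => M))
          (⇑f₀ '' (N : Set M)) n (seq g) := by
      intro g hg m r φ k l hk hl c hc
      choose y hy1 hy2 using hc
      have hc' : c = fun j => f₀ (((⟨y j, hy1 j⟩ : N) : M)) := funext fun j => (hy2 j).symm
      rw [hc']
      exact (master g hg m r φ k hk (fun j => ⟨y j, hy1 j⟩)).trans
        (master g hg m r φ l hl (fun j => ⟨y j, hy1 j⟩)).symm
    -- transport everything through `ULift`
    let e2 : ((W : Filter (ℕ → Fin n → N)).Product (fun _ => M)) ≃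
        ULift.{max v w} ((W : Filter (ℕ → Fin n → N)).Product (fun _ => M)) := Equiv.ulift.symm
    letI S' : L.Structure (ULift.{max v w} ((W : Filter (ℕ → Fin n → N)).Product (fun _ => M))) :=
      Equiv.inducedStructure e2
    let G : ((W : Filter (ℕ → Fin n → N)).Product (fun _ => M)) ≃[L]
        ULift.{max v w} ((W : Filter (ℕ → Fin n → N)).Product (fun _ => M)) :=
      Equiv.inducedStructureEquiv e2
    refine ⟨ULift.{max v w} ((W : Filter (ℕ → Fin n → N)).Product (fun _ => M)), S',
      G.toElementaryEmbedding.comp f₀, fun j i => G (dd j i), ?_, ?_⟩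
    · have h1 := (hInd a (fun α _ ψ c => Iff.rfl)).map_equiv G
      have himg : ⇑(G.toElementaryEmbedding.comp f₀) '' (N : Set M) =
          ⇑G '' (⇑f₀ '' (N : Set M)) := by
        rw [Set.image_image]
        rfl
      have hseq : (fun kk => match kk with
            | 0 => ⇑(G.toElementaryEmbedding.comp f₀) ∘ a
            | (j + 1) => fun i => G (dd j i)) =
          fun kk i => G (seq a kk i) := by
        funext kk i
        cases kk with
        | zero => rfl
        | succ j => rfl
      rw [himg, hseq]
      exact h1
    · have h1 := (hInd b (fun α _ ψ c => (hab_finite N hab α ψ c).symm)).map_equiv G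
      have himg : ⇑(G.toElementaryEmbedding.comp f₀) '' (N : Set M) =
          ⇑G '' (⇑f₀ '' (N : Set M)) := by
        rw [Set.image_image]
        rfl
      have hseq : (fun kk => match kk with
            | 0 => ⇑(G.toElementaryEmbedding.comp f₀) ∘ b
            | (j + 1) => fun i => G (dd j i)) =
          fun kk i => G (seq b kk i) := by
        funext kk i
        cases kk with
        | zero => rfl
        | succ j => rfl
      rw [himg, hseq]
      exact h1
  · -- `M` is empty, hence `n = 0` and everything is trivial
    cases n with
    | succ n' => exact absurd ⟨a 0⟩ hM
    | zero =>
      let e2 : M ≃ ULift.{max v w} M := Equiv.ulift.symm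
      letI S' : L.Structure (ULift.{max v w} M) := Equiv.inducedStructure e2
      refine ⟨ULift.{max v w} M, S', (Equiv.inducedStructureEquiv e2).toElementaryEmbedding,
        fun _ => finZeroElim, ?_, ?_⟩ <;>
      · intro m r φ k l hk hl c hc
        refine iff_of_eq (congrArg φ.Realize ?_)
        funext i
        cases i with
        | inl j => rfl
        | inr p => exact p.2.elim0
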